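/- arXiv:2203.05276 — 4 statements merged into one kernel-verified Lean document; each statement's English description precedes it below -/
import Mathlib

section
/- Let x* be a local minimizer of the problem: minimize q(x) := f(x) + g(x) subject to c(x) ∈ D, where f, c are continuously differentiable, g : ℝ^n → ℝ ∪ {∞} is proper lsc, and D ⊆ ℝ^m is nonempty closed. Then x* is asymptotically M-stationary: there exist sequences xᵏ → x* with q(xᵏ) → q(x*), ηᵏ → 0 in ℝ^n, ζᵏ → 0 in ℝ^m, and yᵏ ∈ ℝ^m, such that for all k: −∇c(xᵏ)ᵀ yᵏ + ηᵏ ∈ ∂q(xᵏ) and yᵏ ∈ N^lim_D(c(xᵏ) + ζᵏ). -/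
open Metric Filter Topology
open scoped RealInnerProductSpace

noncomputable section

variable {E : Type*} [NormedAddCommGroup E] [InnerProductSpace ℝ E]

/-- The (possibly set-valued) metric projection onto `D`. -/
def projSet (D : Set E) (v : E) : Set E :=
  {z | z ∈ D ∧ ‖v - z‖ = Metric.infDist v D}

/-- The limiting (Mordukhovich) normal cone to `D` at `z`,
`N^lim_D(z) = limsup_{v → z} cone (v - proj_D v)`, empty outside `D`. -/
def limNormalCone (D : Set E) (z : E) : Set E :=
  {w | z ∈ D ∧ ∃ (v : ℕ → E) (u : ℕ → E),
      Filter.Tendsto v Filter.atTop (nhds z) ∧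
      Filter.Tendsto u Filter.atTop (nhds w) ∧
      ∀ k, ∃ (lam : ℝ) (p : E), 0 ≤ lam ∧ p ∈ projSet D (v k) ∧ u k = lam • (v k - p)}

/-- The regular (Fréchet) subdifferential of `h : E → ℝ ∪ {∞}` at `x`. -/
def RegSubdiff (h : E → WithTop ℝ) (x : E) : Set E :=
  {v | ∃ hx : ℝ, h x = (hx : WithTop ℝ) ∧
    ∀ ε : ℝ, 0 < ε → ∀ᶠ y in nhds x,
      ((hx + (inner ℝ v (y - x) : ℝ) - ε * ‖y - x‖ : ℝ) : WithTop ℝ) ≤ h y}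

/-- The limiting (Mordukhovich) subdifferential of `h` at `x`:
limits of regular subgradients along `h`-attentive sequences. -/
def LimSubdiff (h : E → WithTop ℝ) (x : E) : Set E :=
  {v | ∃ (xs : ℕ → E) (vs : ℕ → E) (hs : ℕ → ℝ) (hx : ℝ),
      h x = (hx : WithTop ℝ) ∧ (∀ k, h (xs k) = ((hs k : ℝ) : WithTop ℝ)) ∧
      Filter.Tendsto xs Filter.atTop (nhds x) ∧
      Filter.Tendsto hs Filter.atTop (nhds hx) ∧
      Filter.Tendsto vs Filter.atTop (nhds v) ∧
      ∀ k, vs k ∈ RegSubdiff h (xs k)}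

/-- The (possibly set-valued) proximal mapping of `h` with stepsize `γ`. -/
def proxSet (γ : ℝ) (h : E → WithTop ℝ) (x : E) : Set E :=
  {z | ∀ w : E, h z + ((‖z - x‖ ^ 2 / (2 * γ) : ℝ) : WithTop ℝ)
      ≤ h w + ((‖w - x‖ ^ 2 / (2 * γ) : ℝ) : WithTop ℝ)}


lemma topcoe (t : WithTop ℝ) : t = ⊤ ∨ ∃ s : ℝ, t = (s : WithTop ℝ) := by
  induction t using WithTop.recTopCoe with
  | top => exact Or.inl rfl
  | coe s => exact Or.inr ⟨s, rfl⟩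

/-- Extreme value theorem for lower semicontinuous `WithTop ℝ`-valued maps. -/
lemma lsc_exists_min {X : Type*} [TopologicalSpace X] {s : Set X} (hs : IsCompact s)
    (hne : s.Nonempty) {φ : X → WithTop ℝ} (hφ : LowerSemicontinuous φ) :
    ∃ x ∈ s, ∀ y ∈ s, φ x ≤ φ y := by
  have key : (s ∩ ⋂ i : s, φ ⁻¹' Set.Iic (φ i)).Nonempty := by
    apply hs.inter_iInter_nonempty
    · exact fun i => hφ.isClosed_preimage _
    · intro u
      rcases u.eq_empty_or_nonempty with h | h
      · simpa [h] using hne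
      · obtain ⟨i, hi, hmin⟩ := u.exists_min_image (fun i => φ i.1) h
        refine ⟨i.1, i.2, ?_⟩
        simp only [Set.mem_iInter]
        exact fun j hj => hmin j hj
  obtain ⟨x, hxs, hx⟩ := key
  simp only [Set.mem_iInter] at hx
  exact ⟨x, hxs, fun y hy => hx ⟨y, hy⟩⟩

lemma lsc_coe_add {X : Type*} [TopologicalSpace X] {f : X → ℝ} (hf : Continuous f)
    {g : X → WithTop ℝ} (hg : LowerSemicontinuous g) :
    LowerSemicontinuous fun x => ((f x : ℝ) : WithTop ℝ) + g x := by
  intro x y hy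
  rcases topcoe y with rfl | ⟨a, rfl⟩
  · exact absurd hy (by simp [lt_irrefl, not_lt, le_top])
  rcases topcoe (g x) with hgx | ⟨b, hgx⟩
  · have h1 : ((a - f x + 1 : ℝ) : WithTop ℝ) < g x := by rw [hgx]; exact WithTop.coe_lt_top _
    have h2 := hg x _ h1
    have h3 : ∀ᶠ x' in nhds x, f x - 1 < f x' :=
      (hf.continuousAt (x := x)).eventually (eventually_gt_nhds (by linarith))
    filter_upwards [h2, h3] with x' h2' h3'
    rcases topcoe (g x') with hgx' | ⟨b', hgx'⟩
    · simp only [hgx', WithTop.add_top]; exact WithTop.coe_lt_top a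
    · rw [hgx'] at h2'
      simp only [hgx', ← WithTop.coe_add, WithTop.coe_lt_coe]
      rw [gt_iff_lt, WithTop.coe_lt_coe] at h2'
      linarith
  · simp only [hgx, ← WithTop.coe_add, WithTop.coe_lt_coe] at hy
    set δ : ℝ := (f x + b - a) / 2 with hδ
    have hδ0 : 0 < δ := by rw [hδ]; linarith
    have h1 : ((b - δ : ℝ) : WithTop ℝ) < g x := by
      rw [hgx, WithTop.coe_lt_coe]; linarith
    have h2 := hg x _ h1
    have h3 : ∀ᶠ x' in nhds x, f x - δ < f x' :=
      (hf.continuousAt (x := x)).eventually (eventually_gt_nhds (by linarith))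
    filter_upwards [h2, h3] with x' h2' h3'
    rcases topcoe (g x') with hgx' | ⟨b', hgx'⟩
    · simp only [hgx', WithTop.add_top]; exact WithTop.coe_lt_top a
    · rw [hgx'] at h2'
      simp only [hgx', ← WithTop.coe_add, WithTop.coe_lt_coe]
      rw [gt_iff_lt, WithTop.coe_lt_coe] at h2'
      linarith

lemma coe_add_le_coe {t : WithTop ℝ} {a b : ℝ} (h : (a : WithTop ℝ) + t ≤ (b : WithTop ℝ)) :
    ∃ s : ℝ, t = (s : WithTop ℝ) ∧ a + s ≤ b := by
  rcases topcoe t with rfl | ⟨s, rfl⟩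
  · simp [WithTop.add_top] at h
  · rw [← WithTop.coe_add, WithTop.coe_le_coe] at h
    exact ⟨s, rfl, h⟩

variable {E : Type*} [NormedAddCommGroup E] [InnerProductSpace ℝ E]

lemma regSubdiff_mem {q : E → WithTop ℝ} {φ : E → ℝ} {x v : E} {L : E →L[ℝ] ℝ} {hx : ℝ}
    (hqx : q x = (hx : WithTop ℝ))
    (hloc : ∀ᶠ y in nhds x, q x + ((φ x : ℝ) : WithTop ℝ) ≤ q y + ((φ y : ℝ) : WithTop ℝ))
    (hd : HasFDerivAt φ L x)
    (hv : ∀ z, (inner ℝ v z : ℝ) = -(L z)) :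
    v ∈ RegSubdiff q x := by
  refine ⟨hx, hqx, fun ε hε => ?_⟩
  have h1 := Asymptotics.isLittleO_iff.mp hd.isLittleO hε
  filter_upwards [h1, hloc] with y h1y h2y
  rcases topcoe (q y) with hqy | ⟨r, hqy⟩
  · rw [hqy]; exact le_top
  · rw [hqy]
    rw [hqx, hqy, ← WithTop.coe_add, ← WithTop.coe_add, WithTop.coe_le_coe] at h2y
    rw [WithTop.coe_le_coe]
    rw [Real.norm_eq_abs] at h1y
    have h4 := hv (y - x)
    have h6 : φ y - φ x - L (y - x) ≤ ε * ‖y - x‖ := (abs_le.mp h1y).2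
    linarith [h4]

lemma regSubdiff_subset_limSubdiff {q : E → WithTop ℝ} {x v : E} (h : v ∈ RegSubdiff q x) :
    v ∈ LimSubdiff q x := by
  obtain ⟨hx, hqx, hh⟩ := h
  exact ⟨fun _ => x, fun _ => v, fun _ => hx, hx, hqx, fun _ => hqx, tendsto_const_nhds,
    tendsto_const_nhds, tendsto_const_nhds, fun _ => ⟨hx, hqx, hh⟩⟩

lemma proj_segment {D : Set E} (hDne : D.Nonempty) {p vv : E} (hp : p ∈ projSet D vv) {t : ℝ}
    (ht0 : 0 ≤ t) (ht1 : t ≤ 1) : p ∈ projSet D (p + t • (vv - p)) := by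
  obtain ⟨hpD, hpd⟩ := hp
  set w := p + t • (vv - p) with hw
  have hwp : ‖w - p‖ = t * ‖vv - p‖ := by
    rw [hw, add_sub_cancel_left, norm_smul, Real.norm_eq_abs, abs_of_nonneg ht0]
  have hvw : ‖vv - w‖ = (1 - t) * ‖vv - p‖ := by
    have : vv - w = (1 - t) • (vv - p) := by
      rw [hw, sub_smul, one_smul]; abel
    rw [this, norm_smul, Real.norm_eq_abs, abs_of_nonneg (by linarith)]
  have hge : ∀ z ∈ D, t * ‖vv - p‖ ≤ dist w z := by
    intro z hz
    have h1 : ‖vv - p‖ ≤ dist vv z := by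
      rw [hpd]; exact infDist_le_dist_of_mem hz
    have h2 : dist vv z ≤ dist vv w + dist w z := dist_triangle _ _ _
    have h3 : dist vv w = (1 - t) * ‖vv - p‖ := by rw [dist_eq_norm, hvw]
    linarith
  have hinf : infDist w D = t * ‖vv - p‖ := by
    apply le_antisymm
    · calc infDist w D ≤ dist w p := infDist_le_dist_of_mem hpD
        _ = t * ‖vv - p‖ := by rw [dist_eq_norm, hwp]
    · by_contra hcon
      push_neg at hcon
      obtain ⟨z, hzD, hzlt⟩ := (infDist_lt_iff hDne).mp hcon
      exact absurd hzlt (not_lt.mpr (hge z hzD))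
  exact ⟨hpD, by rw [hwp, hinf]⟩

lemma mem_limNormalCone {D : Set E} (hDne : D.Nonempty) {z vv : E}
    (hz : z ∈ projSet D vv) {lam : ℝ} (hlam : 0 ≤ lam) :
    lam • (vv - z) ∈ limNormalCone D z := by
  refine ⟨hz.1, fun j => z + ((j : ℝ) + 1)⁻¹ • (vv - z), fun _ => lam • (vv - z), ?_,
    tendsto_const_nhds, fun k => ?_⟩
  · have h0 : Tendsto (fun j : ℕ => ((j : ℝ) + 1)⁻¹) atTop (nhds 0) :=
      tendsto_one_div_add_atTop_nhds_zero_nat.congr (fun n => by rw [one_div])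
    have h1 : Tendsto (fun j : ℕ => ((j : ℝ) + 1)⁻¹ • (vv - z)) atTop (nhds (0 : E)) := by
      simpa using h0.smul_const (vv - z)
    simpa using tendsto_const_nhds.add h1
  · have hk0 : (0 : ℝ) < (k : ℝ) + 1 := by positivity
    refine ⟨((k : ℝ) + 1) * lam, z, by positivity, ?_, ?_⟩
    · exact proj_segment hDne hz (by positivity) (by
        rw [inv_le_one_iff₀]; right; linarith)
    · show lam • (vv - z) = _
      rw [add_sub_cancel_left, smul_smul, mul_comm ((k : ℝ) + 1) lam, mul_assoc,
        mul_inv_cancel₀ (ne_of_gt hk0), mul_one]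

set_option maxHeartbeats 2000000 in
theorem stmt8 {n m : ℕ} (f : EuclideanSpace ℝ (Fin n) → ℝ) (hf : ContDiff ℝ 1 f)
    (g : EuclideanSpace ℝ (Fin n) → WithTop ℝ)
    (hgproper : ∃ x, g x ≠ ⊤) (hglsc : LowerSemicontinuous g)
    (c : EuclideanSpace ℝ (Fin n) → EuclideanSpace ℝ (Fin m)) (hc : ContDiff ℝ 1 c)
    (D : Set (EuclideanSpace ℝ (Fin m))) (hDne : D.Nonempty) (hDcl : IsClosed D)
    (q : EuclideanSpace ℝ (Fin n) → WithTop ℝ)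
    (hq : q = fun x => ((f x : ℝ) : WithTop ℝ) + g x)
    (xstar : EuclideanSpace ℝ (Fin n))
    (hfeas : g xstar ≠ ⊤ ∧ c xstar ∈ D)
    (hmin : ∃ ε > (0 : ℝ), ∀ x, g x ≠ ⊤ → c x ∈ D → ‖x - xstar‖ < ε → q xstar ≤ q x) :
    ∃ (xs ηs : ℕ → EuclideanSpace ℝ (Fin n)) (ys ζs : ℕ → EuclideanSpace ℝ (Fin m))
      (qs : ℕ → ℝ) (qstar : ℝ),
      q xstar = (qstar : WithTop ℝ) ∧ (∀ k, q (xs k) = ((qs k : ℝ) : WithTop ℝ)) ∧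
      Filter.Tendsto xs Filter.atTop (nhds xstar) ∧
      Filter.Tendsto qs Filter.atTop (nhds qstar) ∧
      Filter.Tendsto ηs Filter.atTop (nhds 0) ∧
      Filter.Tendsto ζs Filter.atTop (nhds 0) ∧
      ∀ k, (-(ContinuousLinearMap.adjoint (fderiv ℝ c (xs k))) (ys k) + ηs k
              ∈ LimSubdiff q (xs k)) ∧
           ys k ∈ limNormalCone D (c (xs k) + ζs k) := by
  obtain ⟨ε, hε, hloc⟩ := hmin
  obtain ⟨hgx, hcxD⟩ := hfeas
  set r : ℝ := ε / 2 with hrdef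
  have hr0 : 0 < r := by positivity
  have hrε : r < ε := by rw [hrdef]; linarith
  set B : Set (EuclideanSpace ℝ (Fin n)) := Metric.closedBall xstar r with hBdef
  have hBc : IsCompact B := isCompact_closedBall _ _
  have hxstarB : xstar ∈ B := Metric.mem_closedBall_self hr0.le
  -- q is lsc
  have hqlsc : LowerSemicontinuous q := by
    rw [hq]; exact lsc_coe_add hf.continuous hglsc
  -- value at xstar
  obtain ⟨b0, hb0⟩ : ∃ b0 : ℝ, g xstar = (b0 : WithTop ℝ) := by
    rcases topcoe (g xstar) with h | h
    · exact absurd h hgx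
    · exact h
  set qstar : ℝ := f xstar + b0 with hqstardef
  have hqstar : q xstar = (qstar : WithTop ℝ) := by
    rw [hq]; show ((f xstar : ℝ) : WithTop ℝ) + g xstar = _
    rw [hb0, ← WithTop.coe_add]
  -- lower bound on q over B
  obtain ⟨xm, hxmB, hxm⟩ := lsc_exists_min hBc ⟨xstar, hxstarB⟩ hqlsc
  obtain ⟨M, hMx, hMle⟩ : ∃ M : ℝ, q xm = (M : WithTop ℝ) ∧ M ≤ qstar := by
    have h := hxm xstar hxstarB
    rw [hqstar] at h
    rcases topcoe (q xm) with h' | ⟨M, h'⟩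
    · rw [h'] at h; exact absurd h (by simp)
    · rw [h', WithTop.coe_le_coe] at h; exact ⟨M, h', h⟩
  have hMq : ∀ y ∈ B, (M : WithTop ℝ) ≤ q y := fun y hy => hMx ▸ hxm y hy
  -- bound on ‖c x‖ over B
  obtain ⟨C, hC⟩ : ∃ C, ∀ x ∈ B, ‖c x‖ ≤ C :=
    hBc.exists_bound_of_continuousOn (hc.continuous.continuousOn)
  have hC0 : 0 ≤ C := le_trans (norm_nonneg _) (hC xstar hxstarB)
  obtain ⟨d0, hd0D⟩ := id hDne
  set R : ℝ := 2 * C + ‖d0‖ + 1 with hRdef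
  set K : Set (EuclideanSpace ℝ (Fin m)) := D ∩ Metric.closedBall 0 R with hKdef
  have hKc : IsCompact K := (isCompact_closedBall (0 : EuclideanSpace ℝ (Fin m)) R).inter_left hDcl
  have hcxK : c xstar ∈ K := by
    refine ⟨hcxD, ?_⟩
    rw [Metric.mem_closedBall, dist_zero_right]
    have := hC xstar hxstarB
    rw [hRdef]; have := norm_nonneg d0; linarith
  have hd0K : d0 ∈ K := by
    refine ⟨hd0D, ?_⟩
    rw [Metric.mem_closedBall, dist_zero_right, hRdef]
    linarith
  set S : Set (EuclideanSpace ℝ (Fin n) × EuclideanSpace ℝ (Fin m)) := B ×ˢ K with hSdef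
  have hSc : IsCompact S := hBc.prod hKc
  have hSne : (xstar, c xstar) ∈ S := ⟨hxstarB, hcxK⟩
  -- the penalty functions
  set pen : ℕ → EuclideanSpace ℝ (Fin n) × EuclideanSpace ℝ (Fin m) → ℝ :=
    fun k p => ((k : ℝ) + 1) / 2 * ‖c p.1 - p.2‖ ^ 2 + 1 / 2 * ‖p.1 - xstar‖ ^ 2 with hpendef
  have hpencont : ∀ k, Continuous (pen k) := by
    intro k
    apply Continuous.add
    · exact continuous_const.mul (((hc.continuous.comp continuous_fst).sub
        continuous_snd).norm.pow 2)
    · exact continuous_const.mul ((continuous_fst.sub continuous_const).norm.pow 2)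
  set Fk : ℕ → EuclideanSpace ℝ (Fin n) × EuclideanSpace ℝ (Fin m) → WithTop ℝ :=
    fun k p => ((pen k p : ℝ) : WithTop ℝ) + q p.1 with hFkdef
  have hqfst : LowerSemicontinuous (fun p : EuclideanSpace ℝ (Fin n) × EuclideanSpace ℝ (Fin m) => q p.1) :=
    fun p y hy => (continuous_fst.tendsto p).eventually (hqlsc p.1 y hy)
  have hFklsc : ∀ k, LowerSemicontinuous (Fk k) := fun k => lsc_coe_add (hpencont k) hqfst
  -- minimizers
  have hex : ∀ k : ℕ, ∃ p ∈ S, ∀ p' ∈ S, Fk k p ≤ Fk k p' :=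
    fun k => lsc_exists_min hSc ⟨_, hSne⟩ (hFklsc k)
  choose P hPS hPmin using hex
  set x : ℕ → EuclideanSpace ℝ (Fin n) := fun k => (P k).1 with hxdef
  set z : ℕ → EuclideanSpace ℝ (Fin m) := fun k => (P k).2 with hzdef
  have hxB : ∀ k, x k ∈ B := fun k => (hPS k).1
  have hzK : ∀ k, z k ∈ K := fun k => (hPS k).2
  -- value bound
  have hub : ∀ k, ((pen k (P k) : ℝ) : WithTop ℝ) + q (x k) ≤ (qstar : WithTop ℝ) := by
    intro k
    have h1 := hPmin k (xstar, c xstar) hSne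
    have h2 : pen k (xstar, c xstar) = 0 := by
      rw [hpendef]; simp
    calc ((pen k (P k) : ℝ) : WithTop ℝ) + q (x k) = Fk k (P k) := rfl
      _ ≤ Fk k (xstar, c xstar) := h1
      _ = ((0 : ℝ) : WithTop ℝ) + q xstar := by rw [hFkdef]; simp [h2]
      _ = (qstar : WithTop ℝ) := by rw [hqstar]; simp
  have hfin : ∀ k, ∃ s : ℝ, q (x k) = (s : WithTop ℝ) ∧ pen k (P k) + s ≤ qstar :=
    fun k => coe_add_le_coe (hub k)
  choose s hs hsle using hfin
  have hMs : ∀ k, M ≤ s k := by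
    intro k
    have h := hMq (x k) (hxB k)
    rw [hs k, WithTop.coe_le_coe] at h; exact h
  have hpeneq : ∀ k : ℕ, pen k (P k)
      = ((k : ℝ) + 1) / 2 * ‖c (x k) - z k‖ ^ 2 + 1 / 2 * ‖x k - xstar‖ ^ 2 := fun k => rfl
  have key1 : ∀ k : ℕ, ((k : ℝ) + 1) / 2 * ‖c (x k) - z k‖ ^ 2 ≤ qstar - M := by
    intro k; have h := hsle k; rw [hpeneq k] at h
    have h1 := hMs k
    have h2 : (0:ℝ) ≤ 1 / 2 * ‖x k - xstar‖ ^ 2 := by positivity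
    linarith
  have key2 : ∀ k : ℕ, s k + 1 / 2 * ‖x k - xstar‖ ^ 2 ≤ qstar := by
    intro k; have h := hsle k; rw [hpeneq k] at h
    have h2 : (0:ℝ) ≤ ((k : ℝ) + 1) / 2 * ‖c (x k) - z k‖ ^ 2 := by positivity
    linarith
  have hskle : ∀ k : ℕ, s k ≤ qstar := by
    intro k; have := key2 k
    have h2 : (0:ℝ) ≤ 1 / 2 * ‖x k - xstar‖ ^ 2 := by positivity
    linarith
  -- the constraint violation tends to 0
  have hζ : Tendsto (fun k => z k - c (x k)) atTop (nhds 0) := by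
    rw [tendsto_zero_iff_norm_tendsto_zero]
    have hsq : Tendsto (fun k => ‖z k - c (x k)‖ ^ 2) atTop (nhds 0) := by
      apply squeeze_zero (g := fun k : ℕ => 2 * (qstar - M) / ((k : ℝ) + 1))
        (fun k => by positivity)
      · intro k
        have h := key1 k
        have hk : (0:ℝ) < (k : ℝ) + 1 := by positivity
        rw [norm_sub_rev, le_div_iff₀ hk]
        nlinarith
      · exact Tendsto.div_atTop tendsto_const_nhds
          (tendsto_atTop_add_const_right atTop 1 tendsto_natCast_atTop_atTop)
    have h2 := (Real.continuous_sqrt.tendsto 0).comp hsq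
    rw [Real.sqrt_zero] at h2
    exact h2.congr fun k => Real.sqrt_sq (norm_nonneg _)
  -- extract a convergent subsequence
  obtain ⟨xbar, hxbarB, φi, hφmono, hφtend⟩ := hBc.tendsto_subseq fun k => hxB k
  have hφatTop : Tendsto φi atTop atTop := hφmono.tendsto_atTop
  have hcφ : Tendsto (fun j => c (x (φi j))) atTop (nhds (c xbar)) :=
    (hc.continuous.tendsto xbar).comp hφtend
  have hzφ : Tendsto (fun j => z (φi j)) atTop (nhds (c xbar)) := by
    have h := hcφ.add (hζ.comp hφatTop)
    rw [add_zero] at h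
    exact h.congr fun j => by simp only [Function.comp_apply]; abel
  have hcxbarK : c xbar ∈ K :=
    hKc.isClosed.mem_of_tendsto hzφ (Eventually.of_forall fun j => hzK (φi j))
  have hcxbarD : c xbar ∈ D := hcxbarK.1
  -- q xbar is finite
  obtain ⟨t, ht⟩ : ∃ t : ℝ, q xbar = (t : WithTop ℝ) := by
    rcases topcoe (q xbar) with h | h
    · exfalso
      have h1 : ((qstar : ℝ) : WithTop ℝ) < q xbar := by rw [h]; exact WithTop.coe_lt_top _
      obtain ⟨j, hj⟩ := (hφtend.eventually (hqlsc xbar _ h1)).exists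
      simp only [Function.comp_apply] at hj
      rw [hs (φi j), gt_iff_lt, WithTop.coe_lt_coe] at hj
      exact absurd (hskle (φi j)) (not_le.mpr hj)
    · exact h
  have hgxbar : g xbar ≠ ⊤ := by
    intro htop
    rw [hq] at ht
    simp only [htop, add_top] at ht
    exact (WithTop.coe_ne_top ht.symm).elim
  have hxbar_near : ‖xbar - xstar‖ < ε := by
    have h := hxbarB
    rw [hBdef, Metric.mem_closedBall, dist_eq_norm] at h
    linarith
  have hqstart : qstar ≤ t := by
    have h := hloc xbar hgxbar hcxbarD hxbar_near
    rw [hqstar, ht, WithTop.coe_le_coe] at h; exact h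
  -- the limit is xstar
  have hxbar_eq : xbar = xstar := by
    by_contra hne
    have hδ0 : 0 < ‖xbar - xstar‖ := by
      rw [norm_pos_iff]; exact sub_ne_zero.mpr hne
    set δ : ℝ := 1 / 2 * ‖xbar - xstar‖ ^ 2 with hδdef
    have hδpos : 0 < δ := by rw [hδdef]; positivity
    have h1 : ((t - δ / 2 : ℝ) : WithTop ℝ) < q xbar := by
      rw [ht, WithTop.coe_lt_coe]; linarith
    have h2 := hφtend.eventually (hqlsc xbar _ h1)
    have h3 : Tendsto (fun j => 1 / 2 * ‖(x ∘ φi) j - xstar‖ ^ 2) atTop (nhds δ) := by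
      have hcont : Continuous (fun y : EuclideanSpace ℝ (Fin n) => 1 / 2 * ‖y - xstar‖ ^ 2) :=
        continuous_const.mul ((continuous_id.sub continuous_const).norm.pow 2)
      exact (hcont.tendsto xbar).comp hφtend
    have h4 := h3.eventually (eventually_gt_nhds (by linarith : δ / 2 < δ))
    obtain ⟨j, hj2, hj4⟩ := (h2.and h4).exists
    simp only [Function.comp_apply] at hj2 hj4
    rw [hs (φi j), gt_iff_lt, WithTop.coe_lt_coe] at hj2
    have h5 := key2 (φi j)
    linarith
  rw [hxbar_eq] at hφtend ht
  have htq : t = qstar := by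
    rw [hqstar] at ht
    exact (WithTop.coe_injective ht).symm
  subst htq
  -- convergence of the values along the subsequence
  have hsφ : Tendsto (fun j => s (φi j)) atTop (nhds qstar) := by
    rw [tendsto_order]
    constructor
    · intro a ha
      have h1 : ((a : ℝ) : WithTop ℝ) < q xstar := by
        rw [hqstar, WithTop.coe_lt_coe]; exact ha
      filter_upwards [hφtend.eventually (hqlsc xstar _ h1)] with j hj
      simp only [Function.comp_apply] at hj
      rwa [hs (φi j), gt_iff_lt, WithTop.coe_lt_coe] at hj
    · intro a ha
      exact Eventually.of_forall fun j => lt_of_le_of_lt (hskle (φi j)) ha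
  -- pass to the tail where iterates are interior points
  have hint : ∀ᶠ j in atTop, (x ∘ φi) j ∈ Metric.ball xstar r :=
    hφtend.eventually (Metric.isOpen_ball.eventually_mem (Metric.mem_ball_self hr0))
  obtain ⟨N, hN⟩ := eventually_atTop.mp hint
  set ψ : ℕ → ℕ := fun j => φi (j + N) with hψdef
  have hψatTop : Tendsto ψ atTop atTop := hφatTop.comp (tendsto_add_atTop_nat N)
  have hxψ : Tendsto (fun j => x (ψ j)) atTop (nhds xstar) :=
    hφtend.comp (tendsto_add_atTop_nat N)
  have hsψ : Tendsto (fun j => s (ψ j)) atTop (nhds qstar) :=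
    hsφ.comp (tendsto_add_atTop_nat N)
  have hζψ : Tendsto (fun j => z (ψ j) - c (x (ψ j))) atTop (nhds 0) := hζ.comp hψatTop
  have hball : ∀ j, x (ψ j) ∈ Metric.ball xstar r := fun j => hN (j + N) (Nat.le_add_left N j)
  -- the projection property of z k
  have hproj : ∀ k : ℕ, z k ∈ projSet D (c (x k)) := by
    intro k
    have hDmin : ∀ w ∈ K, ‖c (x k) - z k‖ ≤ ‖c (x k) - w‖ := by
      intro w hwK
      have h := hPmin k (x k, w) ⟨hxB k, hwK⟩
      have h2 : ((pen k (P k) : ℝ) : WithTop ℝ) + (s k : WithTop ℝ)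
          ≤ ((pen k (x k, w) : ℝ) : WithTop ℝ) + (s k : WithTop ℝ) := by
        rw [← hs k]; exact h
      rw [← WithTop.coe_add, ← WithTop.coe_add, WithTop.coe_le_coe] at h2
      have h3 : pen k (P k) ≤ pen k (x k, w) := by linarith
      rw [hpeneq k] at h3
      have h4 : pen k (x k, w)
          = ((k : ℝ) + 1) / 2 * ‖c (x k) - w‖ ^ 2 + 1 / 2 * ‖x k - xstar‖ ^ 2 := rfl
      rw [h4] at h3
      have hk : (0:ℝ) < ((k : ℝ) + 1) / 2 := by positivity
      have h5 : ‖c (x k) - z k‖ ^ 2 ≤ ‖c (x k) - w‖ ^ 2 := by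
        have h6 : ((k : ℝ) + 1) / 2 * ‖c (x k) - z k‖ ^ 2
            ≤ ((k : ℝ) + 1) / 2 * ‖c (x k) - w‖ ^ 2 := by linarith
        exact (mul_le_mul_iff_right₀ hk).mp h6
      have h7 := Real.sqrt_le_sqrt h5
      rwa [Real.sqrt_sq (norm_nonneg _), Real.sqrt_sq (norm_nonneg _)] at h7
    have hDmin' : ∀ w ∈ D, ‖c (x k) - z k‖ ≤ ‖c (x k) - w‖ := by
      intro w hwD
      by_cases hwball : w ∈ Metric.closedBall (0 : EuclideanSpace ℝ (Fin m)) R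
      · exact hDmin w ⟨hwD, hwball⟩
      · have hRw : R < ‖w‖ := by
          rw [Metric.mem_closedBall, dist_zero_right, not_le] at hwball; exact hwball
        have hcxk : ‖c (x k)‖ ≤ C := hC (x k) (hxB k)
        have h1 : ‖c (x k) - d0‖ ≤ C + ‖d0‖ := le_trans (norm_sub_le _ _) (by linarith)
        have h2 : ‖w‖ - ‖c (x k)‖ ≤ ‖c (x k) - w‖ := by
          rw [norm_sub_rev]; exact norm_sub_norm_le w (c (x k))
        have h3 := hDmin d0 hd0K
        rw [hRdef] at hRw
        linarith
    refine ⟨(hzK k).1, ?_⟩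
    apply le_antisymm
    · by_contra hcon
      push_neg at hcon
      obtain ⟨w, hwD, hwlt⟩ := (infDist_lt_iff hDne).mp hcon
      rw [dist_eq_norm] at hwlt
      exact absurd hwlt (not_lt.mpr (hDmin' w hwD))
    · rw [← dist_eq_norm]; exact infDist_le_dist_of_mem (hzK k).1
  -- assemble the sequences
  refine ⟨fun j => x (ψ j), fun j => xstar - x (ψ j),
    fun j => ((ψ j : ℝ) + 1) • (c (x (ψ j)) - z (ψ j)),
    fun j => z (ψ j) - c (x (ψ j)), fun j => s (ψ j), qstar,
    hqstar, fun j => hs (ψ j), hxψ, hsψ, ?_, hζψ, ?_⟩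
  · have h := (tendsto_const_nhds : Tendsto (fun _ : ℕ => xstar) atTop (nhds xstar)).sub hxψ
    rwa [sub_self] at h
  intro j
  set k := ψ j with hkdef
  set x' := x k with hx'def
  set z' := z k with hz'def
  set ρ : ℝ := (k : ℝ) + 1 with hρdef
  have hρ0 : (0:ℝ) ≤ ρ := by rw [hρdef]; positivity
  constructor
  · -- LimSubdiff membership
    have hA : HasFDerivAt c (fderiv ℝ c x') x' :=
      (hc.differentiable one_ne_zero x').hasFDerivAt
    set A := fderiv ℝ c x' with hAdef
    set φp : EuclideanSpace ℝ (Fin n) → ℝ :=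
      fun y => ρ / 2 * ‖c y - z'‖ ^ 2 + 1 / 2 * ‖y - xstar‖ ^ 2 with hφpdef
    have h1 : HasFDerivAt (fun y => ‖c y - z'‖ ^ 2)
        (2 • (innerSL ℝ (c x' - z')).comp A) x' := (hA.sub_const z').norm_sq
    have h2 : HasFDerivAt (fun y : EuclideanSpace ℝ (Fin n) => ‖y - xstar‖ ^ 2)
        (2 • (innerSL ℝ (x' - xstar)).comp (ContinuousLinearMap.id ℝ _)) x' :=
      ((hasFDerivAt_id x').sub_const xstar).norm_sq
    set L : EuclideanSpace ℝ (Fin n) →L[ℝ] ℝ :=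
      (ρ / 2) • (2 • (innerSL ℝ (c x' - z')).comp A)
        + (1 / 2 : ℝ) • (2 • (innerSL ℝ (x' - xstar)).comp (ContinuousLinearMap.id ℝ _))
      with hLdef
    have hφd : HasFDerivAt φp L x' := (h1.const_mul (ρ / 2)).add (h2.const_mul (1 / 2))
    set v := -(ρ • (ContinuousLinearMap.adjoint A) (c x' - z') + (x' - xstar)) with hvdef
    have hv : ∀ u, (inner ℝ v u : ℝ) = -(L u) := by
      intro u
      rw [hvdef, hLdef]
      simp only [ContinuousLinearMap.add_apply, ContinuousLinearMap.smul_apply,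
        ContinuousLinearMap.coe_smul', Pi.smul_apply, ContinuousLinearMap.comp_apply,
        ContinuousLinearMap.coe_id', id_eq, innerSL_apply_apply, smul_eq_mul]
      rw [inner_neg_left, inner_add_left, real_inner_smul_left,
        ContinuousLinearMap.adjoint_inner_left]
      push_cast
      ring
    have hloc' : ∀ᶠ y in nhds x', q x' + ((φp x' : ℝ) : WithTop ℝ)
        ≤ q y + ((φp y : ℝ) : WithTop ℝ) := by
      filter_upwards [Metric.isOpen_ball.mem_nhds (hball j)] with y hy
      have hyB : y ∈ B := Metric.ball_subset_closedBall hy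
      have h := hPmin k (y, z') ⟨hyB, hzK k⟩
      rw [add_comm (q x'), add_comm (q y)]
      exact h
    have hreg : v ∈ RegSubdiff q x' := regSubdiff_mem (hs k) hloc' hφd hv
    have hveq : -(ContinuousLinearMap.adjoint (fderiv ℝ c x')) (ρ • (c x' - z'))
        + (xstar - x') = v := by
      rw [map_smul, hvdef]
      module
    rw [show (fun j => ((ψ j : ℝ) + 1) • (c (x (ψ j)) - z (ψ j))) j
        = ρ • (c x' - z') from rfl]
    rw [hveq]
    exact regSubdiff_subset_limSubdiff hreg
  · -- limiting normal cone membership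
    have h := mem_limNormalCone hDne (hproj k) hρ0
    have heq : c x' + (z' - c x') = z' := by abel
    rw [show c (x (ψ j)) + (z (ψ j) - c (x (ψ j))) = z' from heq]
    exact h
end
end

section
/- Let x* be feasible for (P): minimize q(x) := f(x)+g(x) subject to c(x) ∈ D (f, c continuously differentiable, g proper lsc, D nonempty closed). Suppose x* is AM-stationary and AM-regular. Then x* is M-stationary: there exists y* ∈ N^lim_D(c(x*)) with −∇c(x*)ᵀ y* ∈ ∂q(x*). -/
open Metric Filter Topology
open scoped RealInnerProductSpace

noncomputable section

variable {E : Type*} [NormedAddCommGroup E] [InnerProductSpace ℝ E]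

/-- The set `M(x,z) = ∂g(x) + ∇c(x)ᵀ N^lim_D(c(x) − z)`. -/
def Mmap {n m : ℕ} (g : EuclideanSpace ℝ (Fin n) → WithTop ℝ)
    (c : EuclideanSpace ℝ (Fin n) → EuclideanSpace ℝ (Fin m))
    (D : Set (EuclideanSpace ℝ (Fin m)))
    (x : EuclideanSpace ℝ (Fin n)) (z : EuclideanSpace ℝ (Fin m)) :
    Set (EuclideanSpace ℝ (Fin n)) :=
  {η | ∃ a ∈ LimSubdiff g x, ∃ w ∈ limNormalCone D (c x - z),
        η = a + (ContinuousLinearMap.adjoint (fderiv ℝ c x)) w}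


section AuxLemmas

lemma withTop_add_eq {a b : ℝ} {t : WithTop ℝ} (h : ((a : ℝ) : WithTop ℝ) + t = ((b : ℝ) : WithTop ℝ)) :
    t = (((b - a : ℝ)) : WithTop ℝ) := by
  induction t using WithTop.recTopCoe with
  | top => simp at h
  | coe r =>
    rw [← WithTop.coe_add, WithTop.coe_inj] at h
    rw [WithTop.coe_inj]; linarith

lemma regSubdiff_add_smooth [CompleteSpace E] {f : E → ℝ} {w x : E} (hw : HasGradientAt f w x)
    (g : E → WithTop ℝ) {v : E} (hv : v ∈ RegSubdiff g x) :
    w + v ∈ RegSubdiff (fun y => ((f y : ℝ) : WithTop ℝ) + g y) x := by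
  obtain ⟨gx, hgx, hineq⟩ := hv
  refine ⟨f x + gx, ?_, ?_⟩
  · show ((f x : ℝ) : WithTop ℝ) + g x = _
    rw [hgx, WithTop.coe_add]
  intro ε hε
  have h2 : ∀ᶠ y in nhds x, ‖f y - f x - ⟪w, y - x⟫‖ ≤ (ε/2) * ‖y - x‖ := by
    have := hw.isLittleO.def (by positivity : (0:ℝ) < ε/2)
    simpa [InnerProductSpace.toDual_apply_apply] using this
  filter_upwards [hineq (ε/2) (by positivity), h2] with y hy1 hy2
  by_cases hgy : g y = ⊤
  · simp [hgy]
  · obtain ⟨r, hr⟩ := WithTop.ne_top_iff_exists.mp hgy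
    rw [← hr] at hy1 ⊢
    rw [WithTop.coe_le_coe] at hy1
    rw [← WithTop.coe_add, WithTop.coe_le_coe]
    have habs := abs_le.mp (by rwa [Real.norm_eq_abs] at hy2)
    rw [inner_add_left]
    nlinarith [habs.1, habs.2, hy1]

lemma hasGradientAt_neg {f : E → ℝ} {w x : E} [CompleteSpace E] (hw : HasGradientAt f w x) :
    HasGradientAt (fun y => -f y) (-w) x := by
  rw [hasGradientAt_iff_hasFDerivAt, map_neg]
  exact hw.hasFDerivAt.neg

lemma regSubdiff_sub_smooth [CompleteSpace E] {f : E → ℝ} {w x : E} (hw : HasGradientAt f w x)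
    (g : E → WithTop ℝ) {v : E}
    (hv : v ∈ RegSubdiff (fun y => ((f y : ℝ) : WithTop ℝ) + g y) x) :
    v - w ∈ RegSubdiff g x := by
  have h := regSubdiff_add_smooth (hasGradientAt_neg hw)
    (fun y => ((f y : ℝ) : WithTop ℝ) + g y) hv
  have hfun : (fun y => (((-f y : ℝ)) : WithTop ℝ) + (((f y : ℝ) : WithTop ℝ) + g y)) = g := by
    funext y
    rw [← add_assoc, ← WithTop.coe_add, neg_add_cancel, WithTop.coe_zero, zero_add]
  rw [hfun] at h
  rwa [neg_add_eq_sub] at h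

lemma gradient_continuous [CompleteSpace E] {f : E → ℝ} (hf : ContDiff ℝ 1 f) :
    Continuous (fun y => gradient f y) := by
  have h : Continuous (fun y => fderiv ℝ f y) := hf.continuous_fderiv one_ne_zero
  exact (InnerProductSpace.toDual ℝ E).symm.continuous.comp h

lemma limSubdiff_add_smooth [CompleteSpace E] {f : E → ℝ} (hf : ContDiff ℝ 1 f)
    (g : E → WithTop ℝ) {x v : E} (hv : v ∈ LimSubdiff g x) :
    gradient f x + v ∈ LimSubdiff (fun y => ((f y : ℝ) : WithTop ℝ) + g y) x := by
  obtain ⟨xs, vs, hs, hx, hgx, hgs, hxs, hhs, hvs, hreg⟩ := hv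
  refine ⟨xs, fun k => gradient f (xs k) + vs k, fun k => f (xs k) + hs k, f x + hx,
    ?_, ?_, hxs, ?_, ?_, ?_⟩
  · show ((f x : ℝ) : WithTop ℝ) + g x = _
    rw [hgx, WithTop.coe_add]
  · intro k
    show ((f (xs k) : ℝ) : WithTop ℝ) + g (xs k) = _
    rw [hgs k, WithTop.coe_add]
  · exact Tendsto.add ((hf.continuous.tendsto x).comp hxs) hhs
  · exact Tendsto.add (((gradient_continuous hf).tendsto x).comp hxs) hvs
  · intro k
    exact regSubdiff_add_smooth
      ((hf.differentiable one_ne_zero).differentiableAt.hasGradientAt) g (hreg k)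

lemma limSubdiff_sub_smooth [CompleteSpace E] {f : E → ℝ} (hf : ContDiff ℝ 1 f)
    (g : E → WithTop ℝ) {x v : E}
    (hv : v ∈ LimSubdiff (fun y => ((f y : ℝ) : WithTop ℝ) + g y) x) :
    v - gradient f x ∈ LimSubdiff g x := by
  obtain ⟨xs, vs, hs, hx, hgx, hgs, hxs, hhs, hvs, hreg⟩ := hv
  refine ⟨xs, fun k => vs k - gradient f (xs k), fun k => hs k - f (xs k), hx - f x,
    withTop_add_eq hgx, fun k => withTop_add_eq (hgs k), hxs, ?_, ?_, ?_⟩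
  · exact Tendsto.sub hhs ((hf.continuous.tendsto x).comp hxs)
  · exact Tendsto.sub hvs (((gradient_continuous hf).tendsto x).comp hxs)
  · intro k
    exact regSubdiff_sub_smooth
      ((hf.differentiable one_ne_zero).differentiableAt.hasGradientAt) g (hreg k)

end AuxLemmas

theorem stmt9 {n m : ℕ} (f : EuclideanSpace ℝ (Fin n) → ℝ) (hf : ContDiff ℝ 1 f)
    (g : EuclideanSpace ℝ (Fin n) → WithTop ℝ)
    (hgproper : ∃ x, g x ≠ ⊤) (hglsc : LowerSemicontinuous g)
    (c : EuclideanSpace ℝ (Fin n) → EuclideanSpace ℝ (Fin m)) (hc : ContDiff ℝ 1 c)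
    (D : Set (EuclideanSpace ℝ (Fin m))) (hDne : D.Nonempty) (hDcl : IsClosed D)
    (q : EuclideanSpace ℝ (Fin n) → WithTop ℝ)
    (hq : q = fun x => ((f x : ℝ) : WithTop ℝ) + g x)
    (xstar : EuclideanSpace ℝ (Fin n))
    (hfeas : g xstar ≠ ⊤ ∧ c xstar ∈ D)
    -- AM-stationarity of xstar
    (hAMstat : ∃ (xs ηs : ℕ → EuclideanSpace ℝ (Fin n)) (ys ζs : ℕ → EuclideanSpace ℝ (Fin m))
      (qs : ℕ → ℝ) (qstar : ℝ),
      q xstar = (qstar : WithTop ℝ) ∧ (∀ k, q (xs k) = ((qs k : ℝ) : WithTop ℝ)) ∧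
      Filter.Tendsto xs Filter.atTop (nhds xstar) ∧
      Filter.Tendsto qs Filter.atTop (nhds qstar) ∧
      Filter.Tendsto ηs Filter.atTop (nhds 0) ∧
      Filter.Tendsto ζs Filter.atTop (nhds 0) ∧
      ∀ k, (-(ContinuousLinearMap.adjoint (fderiv ℝ c (xs k))) (ys k) + ηs k
              ∈ LimSubdiff q (xs k)) ∧
           ys k ∈ limNormalCone D (c (xs k) + ζs k))
    -- AM-regularity of xstar
    (hAMreg : ∀ η : EuclideanSpace ℝ (Fin n),
      (∃ (xs : ℕ → EuclideanSpace ℝ (Fin n)) (zs : ℕ → EuclideanSpace ℝ (Fin m))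
         (ηs : ℕ → EuclideanSpace ℝ (Fin n)) (gs : ℕ → ℝ) (gstar : ℝ),
        g xstar = (gstar : WithTop ℝ) ∧ (∀ k, g (xs k) = ((gs k : ℝ) : WithTop ℝ)) ∧
        Filter.Tendsto xs Filter.atTop (nhds xstar) ∧
        Filter.Tendsto gs Filter.atTop (nhds gstar) ∧
        Filter.Tendsto zs Filter.atTop (nhds 0) ∧
        Filter.Tendsto ηs Filter.atTop (nhds η) ∧
        ∀ k, ηs k ∈ Mmap g c D (xs k) (zs k)) → η ∈ Mmap g c D xstar 0) :
    ∃ ystar ∈ limNormalCone D (c xstar),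
      -(ContinuousLinearMap.adjoint (fderiv ℝ c xstar)) ystar ∈ LimSubdiff q xstar := by
  subst hq
  obtain ⟨xs, ηs, ys, ζs, qs, qstar, hqx, hqs, hxs, hqst, hηt, hζt, hk⟩ := hAMstat
  have hgradc : Continuous (fun y => gradient f y) := gradient_continuous hf
  have hη : -gradient f xstar ∈ Mmap g c D xstar 0 := by
    apply hAMreg
    refine ⟨xs, fun k => -ζs k, fun k => ηs k - gradient f (xs k),
      fun k => qs k - f (xs k), qstar - f xstar,
      withTop_add_eq hqx, fun k => withTop_add_eq (hqs k), hxs, ?_, ?_, ?_, ?_⟩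
    · exact Tendsto.sub hqst ((hf.continuous.tendsto xstar).comp hxs)
    · simpa using hζt.neg
    · have := Tendsto.sub hηt ((hgradc.tendsto xstar).comp hxs)
      simpa using this
    · intro k
      refine ⟨-(ContinuousLinearMap.adjoint (fderiv ℝ c (xs k))) (ys k) + ηs k
          - gradient f (xs k), ?_, ys k, ?_, ?_⟩
      · exact limSubdiff_sub_smooth hf g (hk k).1
      · rw [sub_neg_eq_add]; exact (hk k).2
      · abel
  obtain ⟨a, ha, w, hw, heq⟩ := hη
  rw [sub_zero] at hw
  refine ⟨w, hw, ?_⟩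
  have h2 : gradient f xstar + a
      = -((ContinuousLinearMap.adjoint (fderiv ℝ c xstar)) w) := by
    apply eq_neg_of_add_eq_zero_left
    rw [add_assoc, ← heq]
    abel
  rw [← h2]
  exact limSubdiff_add_smooth hf g ha
end
end

section
/- In ℝ with D := (−∞,0], f(x) := 0, c(x) := x, and g(x) := x for x ≤ 0, g(x) := 1 − x for x > 0, the point x* = 0 is the global maximizer of g over the feasible set, the limiting subdifferential satisfies ∂g(0) = [1,∞), and x* = 0 is not M-stationary for the problem: minimize f(x)+g(x) subject to c(x) ∈ D; i.e., there is no y* ∈ N^lim_D(0) = [0,∞) with 0 ∈ ∂g(0) + y*. -/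
open Metric Filter Topology
open scoped RealInnerProductSpace

noncomputable section

variable {E : Type*} [NormedAddCommGroup E] [InnerProductSpace ℝ E]

def mygG : ℝ → WithTop ℝ := fun x : ℝ =>
  if x ≤ 0 then ((x : ℝ) : WithTop ℝ) else ((1 - x : ℝ) : WithTop ℝ)

lemma myg_inner (a b : ℝ) : (inner ℝ a b : ℝ) = a * b := by
  simp [real_inner_comm, RCLike.inner_apply, mul_comm]

lemma myg_infDist (x : ℝ) (h : 0 ≤ x) : Metric.infDist x (Set.Iic (0:ℝ)) = x := by
  apply le_antisymm
  · simpa [abs_of_nonneg h] using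
      Metric.infDist_le_dist_of_mem (x := x) (s := Set.Iic (0:ℝ)) (y := 0) (Set.mem_Iic.2 le_rfl)
  · by_contra hlt
    push_neg at hlt
    obtain ⟨y, hy, hd⟩ := (Metric.infDist_lt_iff ⟨0, Set.mem_Iic.2 le_rfl⟩).1 hlt
    simp only [Set.mem_Iic] at hy
    rw [Real.dist_eq, abs_of_nonneg (by linarith)] at hd
    linarith

lemma myg_regAt0 (v : ℝ) (hv : 1 ≤ v) : v ∈ RegSubdiff mygG 0 := by
  refine ⟨0, by simp [mygG], fun ε hε => ?_⟩
  rw [Metric.eventually_nhds_iff]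
  refine ⟨1 / (v + 2), by positivity, fun y hy => ?_⟩
  rw [Real.dist_eq, sub_zero] at hy
  simp only [sub_zero, myg_inner, Real.norm_eq_abs]
  by_cases hy0 : y ≤ 0
  · have : mygG y = ((y : ℝ) : WithTop ℝ) := by simp [mygG, hy0]
    rw [this, WithTop.coe_le_coe]
    rw [abs_of_nonpos hy0]
    nlinarith
  · push_neg at hy0
    have : mygG y = ((1 - y : ℝ) : WithTop ℝ) := by simp [mygG, not_le.2 hy0]
    rw [this, WithTop.coe_le_coe]
    rw [abs_of_pos hy0] at hy ⊢
    have h1 : (v + 2) * y < 1 := by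
      rw [lt_div_iff₀ (by positivity)] at hy
      linarith [hy]
    nlinarith

lemma myg_regNeg (x : ℝ) (hx : x < 0) : (1:ℝ) ∈ RegSubdiff mygG x := by
  refine ⟨x, by simp [mygG, hx.le], fun ε hε => ?_⟩
  rw [Metric.eventually_nhds_iff]
  refine ⟨-x, by linarith, fun y hy => ?_⟩
  rw [Real.dist_eq] at hy
  have hy0 : y ≤ 0 := by
    have := abs_lt.1 hy
    linarith [this.2]
  have : mygG y = ((y : ℝ) : WithTop ℝ) := by simp [mygG, hy0]
  rw [this, WithTop.coe_le_coe, myg_inner, Real.norm_eq_abs]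
  have : 0 ≤ |y - x| := abs_nonneg _
  nlinarith

lemma myg_regBound (x v : ℝ) (hx : x ≤ 0) (h : v ∈ RegSubdiff mygG x) : 1 ≤ v := by
  obtain ⟨hxv, heq, hineq⟩ := h
  have hGx : mygG x = ((x : ℝ) : WithTop ℝ) := by simp [mygG, hx]
  rw [hGx] at heq
  have hxx : hxv = x := by exact_mod_cast heq.symm
  rw [hxx] at hineq
  have key : ∀ ε : ℝ, 0 < ε → 1 ≤ v + ε := by
    intro ε hε
    obtain ⟨δ, hδ, hball⟩ := Metric.eventually_nhds_iff.1 (hineq ε hε)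
    set y := x - δ / 2 with hy
    have hdy : dist y x < δ := by
      rw [Real.dist_eq]
      rw [hy]; rw [show x - δ/2 - x = -(δ/2) by ring, abs_neg, abs_of_pos (by linarith)]
      linarith
    have := hball hdy
    have hy0 : y ≤ 0 := by rw [hy]; linarith
    have hGy : mygG y = ((y : ℝ) : WithTop ℝ) := by simp [mygG, hy0]
    rw [hGy, WithTop.coe_le_coe, myg_inner, Real.norm_eq_abs] at this
    rw [hy] at this
    rw [show x - δ/2 - x = -(δ/2) by ring, abs_neg, abs_of_pos (by linarith)] at this
    have hδ2 : 0 < δ / 2 := by linarith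
    nlinarith
  by_contra hlt
  push_neg at hlt
  have := key ((1 - v) / 2) (by linarith)
  linarith

lemma myg_limSubdiff : LimSubdiff mygG 0 = {v : ℝ | 1 ≤ v} := by
  ext v
  constructor
  · rintro ⟨xs, vs, hs, hx, hG0, hGk, hxs, hhs, hvs, hreg⟩
    have hG0' : mygG 0 = ((0 : ℝ) : WithTop ℝ) := by simp [mygG]
    rw [hG0'] at hG0
    have hx0 : hx = (0:ℝ) := by exact_mod_cast hG0.symm
    rw [hx0] at hhs
    have hev1 : ∀ᶠ k in atTop, |hs k| < 1/2 := by
      have := Metric.tendsto_nhds.1 hhs (1/2) (by norm_num)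
      filter_upwards [this] with k hk
      simpa [Real.dist_eq] using hk
    have hev2 : ∀ᶠ k in atTop, |xs k| < 1/4 := by
      have := Metric.tendsto_nhds.1 hxs (1/4) (by norm_num)
      filter_upwards [this] with k hk
      simpa [Real.dist_eq] using hk
    have hev : ∀ᶠ k in atTop, (1:ℝ) ≤ vs k := by
      filter_upwards [hev1, hev2] with k h1 h2
      have hle : xs k ≤ 0 := by
        by_contra hpos
        push_neg at hpos
        have : mygG (xs k) = ((1 - xs k : ℝ) : WithTop ℝ) := by simp [mygG, not_le.2 hpos]
        rw [hGk k] at this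
        have : hs k = 1 - xs k := by exact_mod_cast this
        have := abs_lt.1 h1
        have := abs_lt.1 h2
        linarith
      exact myg_regBound _ _ hle (hreg k)
    exact ge_of_tendsto hvs hev
  · intro hv
    exact ⟨fun _ => 0, fun _ => v, fun _ => 0, 0, by simp [mygG], fun k => by simp [mygG],
      tendsto_const_nhds, tendsto_const_nhds, tendsto_const_nhds, fun k => myg_regAt0 v hv⟩

lemma myg_cone : limNormalCone (Set.Iic (0:ℝ)) 0 = {y : ℝ | 0 ≤ y} := by
  ext w
  constructor
  · rintro ⟨-, v, u, hv, hu, hk⟩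
    have hnn : ∀ k, 0 ≤ u k := by
      intro k
      obtain ⟨lam, p, hlam, ⟨hpD, hpd⟩, hueq⟩ := hk k
      simp only [Set.mem_Iic] at hpD
      by_cases hvk : v k ≤ 0
      · have : Metric.infDist (v k) (Set.Iic (0:ℝ)) = 0 :=
          Metric.infDist_zero_of_mem (Set.mem_Iic.2 hvk)
        rw [this, norm_eq_zero, sub_eq_zero] at hpd
        rw [hueq, hpd]
        simp
      · push_neg at hvk
        have : 0 ≤ v k - p := by linarith
        rw [hueq, smul_eq_mul]
        positivity
    exact ge_of_tendsto hu (Filter.Eventually.of_forall hnn)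
  · intro hw
    simp only [Set.mem_setOf_eq] at hw
    refine ⟨Set.mem_Iic.2 le_rfl, fun k => 1 / ((k:ℝ) + 1), fun _ => w,
      tendsto_one_div_add_atTop_nhds_zero_nat, tendsto_const_nhds, fun k => ?_⟩
    have hk1 : (0:ℝ) < (k:ℝ) + 1 := by positivity
    refine ⟨w * ((k:ℝ) + 1), 0, mul_nonneg hw hk1.le, ⟨Set.mem_Iic.2 le_rfl, ?_⟩, ?_⟩
    · rw [sub_zero, Real.norm_eq_abs, abs_of_pos (by positivity),
        myg_infDist _ (by positivity)]
    · rw [sub_zero, smul_eq_mul]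
      field_simp


theorem stmt10 (g : ℝ → WithTop ℝ)
    (hg : g = fun x : ℝ => if x ≤ 0 then ((x : ℝ) : WithTop ℝ) else ((1 - x : ℝ) : WithTop ℝ)) :
    (∀ x ∈ Set.Iic (0 : ℝ), g x ≤ g 0) ∧
    LimSubdiff g 0 = {v : ℝ | 1 ≤ v} ∧
    limNormalCone (Set.Iic (0 : ℝ)) 0 = {y : ℝ | 0 ≤ y} ∧
    ¬ ∃ ystar : ℝ, ystar ∈ limNormalCone (Set.Iic (0 : ℝ)) 0 ∧ -ystar ∈ LimSubdiff g 0 := by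
  have hgG : g = mygG := by rw [hg]; rfl
  subst hgG
  refine ⟨?_, myg_limSubdiff, myg_cone, ?_⟩
  · intro x hx
    simp only [Set.mem_Iic] at hx
    have h1 : mygG x = ((x : ℝ) : WithTop ℝ) := by simp [mygG, hx]
    have h2 : mygG 0 = ((0 : ℝ) : WithTop ℝ) := by simp [mygG]
    rw [h1, h2, WithTop.coe_le_coe]
    exact hx
  · rintro ⟨y, hy1, hy2⟩
    rw [myg_cone] at hy1
    rw [myg_limSubdiff] at hy2
    simp only [Set.mem_setOf_eq] at hy1 hy2
    linarith
end
end

section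
/- Let q : ℝ^n → ℝ ∪ {∞} be proper lsc, c : ℝ^n → ℝ^m continuous, D ⊆ ℝ^m nonempty closed, and Y ⊆ ℝ^m bounded. Fix μ_k → 0 (μ_k > 0), ŷᵏ ∈ Y, sᵏ ∈ D, and suppose there is B ∈ ℝ with q(xᵏ) + (1/(2μ_k))‖c(xᵏ) + μ_k ŷᵏ − sᵏ‖² − (μ_k/2)‖ŷᵏ‖² ≤ B for all k. If xᵏ → x* along a subsequence, then x* ∈ dom q, c(xᵏ) − sᵏ → 0 along that subsequence, sᵏ → c(x*) along it, and c(x*) ∈ D. -/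
open Metric Filter Topology
open scoped RealInnerProductSpace

noncomputable section

variable {E : Type*} [NormedAddCommGroup E] [InnerProductSpace ℝ E]

theorem stmt11 {n m : ℕ} (q : EuclideanSpace ℝ (Fin n) → WithTop ℝ)
    (hqproper : ∃ x, q x ≠ ⊤) (hqlsc : LowerSemicontinuous q)
    (c : EuclideanSpace ℝ (Fin n) → EuclideanSpace ℝ (Fin m)) (hc : Continuous c)
    (D : Set (EuclideanSpace ℝ (Fin m))) (hDne : D.Nonempty) (hDcl : IsClosed D)
    (μ : ℕ → ℝ) (hμpos : ∀ k, 0 < μ k) (hμ : Filter.Tendsto μ Filter.atTop (nhds 0))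
    (yhat : ℕ → EuclideanSpace ℝ (Fin m)) (R : ℝ) (hY : ∀ k, ‖yhat k‖ ≤ R)
    (xs : ℕ → EuclideanSpace ℝ (Fin n)) (ss : ℕ → EuclideanSpace ℝ (Fin m))
    (hsD : ∀ k, ss k ∈ D) (B : ℝ)
    (hbound : ∀ k, q (xs k) +
      (((1 / (2 * μ k)) * ‖c (xs k) + μ k • yhat k - ss k‖ ^ 2
          - (μ k / 2) * ‖yhat k‖ ^ 2 : ℝ) : WithTop ℝ) ≤ (B : WithTop ℝ))
    (φ : ℕ → ℕ) (hφ : StrictMono φ) (xstar : EuclideanSpace ℝ (Fin n))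
    (hxconv : Filter.Tendsto (fun k => xs (φ k)) Filter.atTop (nhds xstar)) :
    q xstar ≠ ⊤ ∧
    Filter.Tendsto (fun k => c (xs (φ k)) - ss (φ k)) Filter.atTop (nhds 0) ∧
    Filter.Tendsto (fun k => ss (φ k)) Filter.atTop (nhds (c xstar)) ∧
    c xstar ∈ D := by
  -- real value of q at iterates, and the real inequality
  have hfin : ∀ k, ∃ a : ℝ, q (xs k) = (a : WithTop ℝ) ∧
      a + ((1 / (2 * μ k)) * ‖c (xs k) + μ k • yhat k - ss k‖ ^ 2
          - (μ k / 2) * ‖yhat k‖ ^ 2) ≤ B := by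
    intro k
    have h := hbound k
    cases hq : q (xs k) with
    | top =>
      rw [hq] at h
      simp [top_add] at h
    | coe a =>
      rw [hq] at h
      refine ⟨a, rfl, ?_⟩
      rw [← WithTop.coe_add, WithTop.coe_le_coe] at h
      exact h
  choose a ha hab using hfin
  have hR0 : 0 ≤ R := le_trans (norm_nonneg _) (hY 0)
  have hy2 : ∀ k, ‖yhat k‖ ^ 2 ≤ R ^ 2 := fun k =>
    pow_le_pow_left₀ (norm_nonneg _) (hY k) 2
  have hμφ : Filter.Tendsto (fun k => μ (φ k)) Filter.atTop (nhds 0) :=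
    hμ.comp hφ.tendsto_atTop
  have hμsmall : ∀ᶠ k in Filter.atTop, μ (φ k) < 1 :=
    hμφ.eventually_lt_const (by norm_num)
  -- upper bound on a
  have haub : ∀ k, μ k < 1 → a k ≤ B + R ^ 2 / 2 := by
    intro k hk
    have h1 := hab k
    have h2 : 0 ≤ (1 / (2 * μ k)) * ‖c (xs k) + μ k • yhat k - ss k‖ ^ 2 :=
      mul_nonneg (one_div_nonneg.mpr (by linarith [hμpos k])) (sq_nonneg _)
    have h3 := hy2 k
    have h4 := (hμpos k).le
    nlinarith [sq_nonneg (‖yhat k‖), hμpos k]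
  -- q xstar is finite
  have hqfin : ∃ astar : ℝ, q xstar = (astar : WithTop ℝ) := by
    cases hqx : q xstar with
    | top =>
      exfalso
      have hlt : ((B + R ^ 2 / 2 : ℝ) : WithTop ℝ) < q xstar := by
        rw [hqx]; exact WithTop.coe_lt_top _
      have hev := hxconv.eventually (hqlsc xstar _ hlt)
      have := (hev.and hμsmall).exists
      obtain ⟨k, hk1, hk2⟩ := this
      rw [ha (φ k), gt_iff_lt, WithTop.coe_lt_coe] at hk1
      exact absurd (haub (φ k) hk2) (not_le.mpr hk1)
    | coe astar => exact ⟨astar, rfl⟩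
  obtain ⟨astar, hqx⟩ := hqfin
  -- eventual lower bound on a (φ k)
  have hlb : ∀ᶠ k in Filter.atTop, astar - 1 < a (φ k) := by
    have hlt : ((astar - 1 : ℝ) : WithTop ℝ) < q xstar := by
      rw [hqx, WithTop.coe_lt_coe]; linarith
    have hev := hxconv.eventually (hqlsc xstar _ hlt)
    filter_upwards [hev] with k hk
    rw [ha (φ k), gt_iff_lt, WithTop.coe_lt_coe] at hk
    exact hk
  set C : ℝ := B - (astar - 1) + R ^ 2 / 2 with hC
  -- squeeze: the squared norm tends to 0
  have hsq : Filter.Tendsto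
      (fun k => ‖c (xs (φ k)) + μ (φ k) • yhat (φ k) - ss (φ k)‖ ^ 2)
      Filter.atTop (nhds 0) := by
    have h2μC : Filter.Tendsto (fun k => 2 * μ (φ k) * C) Filter.atTop (nhds 0) := by
      have := (hμφ.const_mul 2).mul_const C
      simpa using this
    refine squeeze_zero' ?_ ?_ h2μC
    · filter_upwards with k; positivity
    · filter_upwards [hlb, hμsmall] with k hk1 hk2
      have h1 := hab (φ k)
      have hμp := hμpos (φ k)
      have h3 := hy2 (φ k)
      have hne : μ (φ k) ≠ 0 := hμp.ne'
      have hμh : μ (φ k) * ‖yhat (φ k)‖ ^ 2 ≤ 1 * R ^ 2 :=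
        mul_le_mul hk2.le h3 (sq_nonneg _) zero_le_one
      have key : (1 / (2 * μ (φ k))) * ‖c (xs (φ k)) + μ (φ k) • yhat (φ k) - ss (φ k)‖ ^ 2 ≤ C := by
        rw [hC]; linarith
      calc ‖c (xs (φ k)) + μ (φ k) • yhat (φ k) - ss (φ k)‖ ^ 2
          = 2 * μ (φ k) * ((1 / (2 * μ (φ k))) * ‖c (xs (φ k)) + μ (φ k) • yhat (φ k) - ss (φ k)‖ ^ 2) := by
            field_simp
        _ ≤ 2 * μ (φ k) * C := mul_le_mul_of_nonneg_left key (by linarith)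
  -- the vector c + μ y - s tends to 0
  have hvec : Filter.Tendsto
      (fun k => c (xs (φ k)) + μ (φ k) • yhat (φ k) - ss (φ k))
      Filter.atTop (nhds 0) := by
    rw [tendsto_zero_iff_norm_tendsto_zero]
    have : Filter.Tendsto
        (fun k => Real.sqrt (‖c (xs (φ k)) + μ (φ k) • yhat (φ k) - ss (φ k)‖ ^ 2))
        Filter.atTop (nhds (Real.sqrt 0)) :=
      (Real.continuous_sqrt.tendsto 0).comp hsq
    simpa [Real.sqrt_sq (norm_nonneg _)] using this
  -- μ • yhat tends to 0
  have hμy : Filter.Tendsto (fun k => μ (φ k) • yhat (φ k)) Filter.atTop (nhds 0) := by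
    rw [tendsto_zero_iff_norm_tendsto_zero]
    refine squeeze_zero (g := fun k => μ (φ k) * R) (fun k => norm_nonneg _) (fun k => ?_) ?_
    · calc ‖μ (φ k) • yhat (φ k)‖ = |μ (φ k)| * ‖yhat (φ k)‖ := norm_smul _ _
        _ ≤ |μ (φ k)| * R := mul_le_mul_of_nonneg_left (hY _) (abs_nonneg _)
        _ = μ (φ k) * R := by rw [abs_of_pos (hμpos _)]
    · simpa using hμφ.mul_const R
  have hcs : Filter.Tendsto (fun k => c (xs (φ k)) - ss (φ k))
      Filter.atTop (nhds 0) := by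
    have := hvec.sub hμy
    simp only [sub_zero] at this
    convert this using 2 with k
    abel
  have hcφ : Filter.Tendsto (fun k => c (xs (φ k))) Filter.atTop (nhds (c xstar)) :=
    (hc.tendsto xstar).comp hxconv
  have hsφ : Filter.Tendsto (fun k => ss (φ k)) Filter.atTop (nhds (c xstar)) := by
    have := hcφ.sub hcs
    simpa using this
  have hcD : c xstar ∈ D :=
    hDcl.mem_of_tendsto hsφ (Filter.Eventually.of_forall fun k => hsD (φ k))
  exact ⟨by rw [hqx]; exact WithTop.coe_ne_top, hcs, hsφ, hcD⟩
end
end
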